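/- arXiv:2506.03358 — 4 statements merged into one kernel-verified Lean document; each statement's English description precedes it below -/
import Mathlib

section
/- Suppose φ : ℝⁿ → ℝ is differentiable with L-Lipschitz gradient (L > 0), f : ℝⁿ → ℝ satisfies |f(x) − φ(x)| ≤ ε_f for all x, η ∈ (0,1/2], α > 0, and d, g ∈ ℝⁿ. If the line-search condition fails at step size α, i.e. f(x + α d) ≥ f(x) + η α gᵀd + 2ε_f, then −(1−η) gᵀd ≤ ‖∇φ(x) − g‖·‖d‖ + (L/2)·α·‖d‖². -/
open Real intervalIntegral

lemma descent {E : Type*} [NormedAddCommGroup E] [InnerProductSpace ℝ E] [CompleteSpace E]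
    (φ : E → ℝ) (L : ℝ) (hL : 0 ≤ L) (hφ : Differentiable ℝ φ)
    (hLip : LipschitzWith (Real.toNNReal L) (fun y => gradient φ y))
    (x v : E) :
    φ (x + v) ≤ φ x + (inner ℝ (gradient φ x) v : ℝ) + L / 2 * ‖v‖ ^ 2 := by
  set c : ℝ → E := fun t => x + t • v with hc
  have hder : ∀ t : ℝ, HasDerivAt (fun t => φ (c t))
      ((inner ℝ (gradient φ (c t)) v : ℝ)) t := by
    intro t
    have h1 : HasDerivAt c v t := by
      simpa only [one_smul, hc, id] using ((hasDerivAt_id t).smul_const v).const_add x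
    have h2 := (hφ (c t)).hasGradientAt.hasFDerivAt
    have := h2.comp_hasDerivAt t h1
    simpa [Function.comp_def] using this
  have hcont : Continuous fun t : ℝ => (inner ℝ (gradient φ (c t)) v : ℝ) := by
    apply Continuous.inner
    · exact hLip.continuous.comp (by continuity)
    · exact continuous_const
  have key : φ (x + v) - φ x = ∫ t in (0:ℝ)..1, (inner ℝ (gradient φ (c t)) v : ℝ) := by
    have := intervalIntegral.integral_eq_sub_of_hasDerivAt
      (f := fun t => φ (c t)) (fun t _ => hder t)
      (hcont.intervalIntegrable 0 1)
    simp only [hc] at this ⊢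
    rw [this]; norm_num
  have hbound : ∀ t ∈ Set.Icc (0:ℝ) 1,
      (inner ℝ (gradient φ (c t)) v : ℝ) ≤ (inner ℝ (gradient φ x) v : ℝ) + L * t * ‖v‖ ^ 2 := by
    intro t ht
    have : (inner ℝ (gradient φ (c t)) v : ℝ) - (inner ℝ (gradient φ x) v : ℝ)
        = inner ℝ (gradient φ (c t) - gradient φ x) v := by rw [inner_sub_left]
    have h3 : (inner ℝ (gradient φ (c t) - gradient φ x) v : ℝ)
        ≤ ‖gradient φ (c t) - gradient φ x‖ * ‖v‖ := real_inner_le_norm _ _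
    have h4 : ‖gradient φ (c t) - gradient φ x‖ ≤ L * (t * ‖v‖) := by
      have := hLip.dist_le_mul (c t) x
      rw [dist_eq_norm] at this
      have hcx : c t - x = t • v := by simp [hc]
      calc ‖gradient φ (c t) - gradient φ x‖ ≤ (Real.toNNReal L) * dist (c t) x := this
        _ = L * ‖c t - x‖ := by rw [dist_eq_norm, Real.coe_toNNReal _ hL]
        _ = L * (t * ‖v‖) := by rw [hcx, norm_smul]; simp [abs_of_nonneg ht.1]
    nlinarith [norm_nonneg v, real_inner_le_norm (gradient φ (c t) - gradient φ x) v,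
      mul_le_mul_of_nonneg_right h4 (norm_nonneg v), this]
  have hint : (∫ t in (0:ℝ)..1, (inner ℝ (gradient φ (c t)) v : ℝ))
      ≤ ∫ t in (0:ℝ)..1, ((inner ℝ (gradient φ x) v : ℝ) + L * t * ‖v‖ ^ 2) := by
    apply intervalIntegral.integral_mono_on (by norm_num)
      (hcont.intervalIntegrable 0 1)
      (by apply Continuous.intervalIntegrable; continuity)
    exact hbound
  have hval : (∫ t in (0:ℝ)..1, ((inner ℝ (gradient φ x) v : ℝ) + L * t * ‖v‖ ^ 2))
      = (inner ℝ (gradient φ x) v : ℝ) + L / 2 * ‖v‖ ^ 2 := by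
    rw [intervalIntegral.integral_add (by apply Continuous.intervalIntegrable; continuity)
      (by apply Continuous.intervalIntegrable; continuity)]
    have h5 : (∫ t in (0:ℝ)..1, L * t * ‖v‖ ^ 2) = ∫ t in (0:ℝ)..1, (L * ‖v‖ ^ 2) * t := by
      congr 1; funext t; ring
    rw [h5, intervalIntegral.integral_const_mul, integral_id]
    simp; ring
  linarith [key ▸ hint.trans_eq hval]

theorem stmt_2 (n : ℕ) (φ f : EuclideanSpace ℝ (Fin n) → ℝ)
    (x g d : EuclideanSpace ℝ (Fin n)) (L ε_f η α : ℝ)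
    (hL : 0 < L) (hφ : Differentiable ℝ φ)
    (hLip : LipschitzWith (Real.toNNReal L) (fun y => gradient φ y))
    (hεf : 0 ≤ ε_f) (hf : ∀ y, |f y - φ y| ≤ ε_f)
    (hη0 : 0 < η) (hη1 : η ≤ 1 / 2) (hα : 0 < α)
    (hfail : f (x + α • d) ≥ f x + η * α * (inner ℝ g d : ℝ) + 2 * ε_f) :
    -(1 - η) * (inner ℝ g d : ℝ) ≤ ‖gradient φ x - g‖ * ‖d‖ + L / 2 * α * ‖d‖ ^ 2 := by
  have h1 := abs_le.1 (hf (x + α • d))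
  have h2 := abs_le.1 (hf x)
  have hd := descent φ L hL.le hφ hLip x (α • d)
  have hsm : (inner ℝ (gradient φ x) (α • d) : ℝ) = α * inner ℝ (gradient φ x) d :=
    real_inner_smul_right _ _ _
  have hns : ‖α • d‖ ^ 2 = α ^ 2 * ‖d‖ ^ 2 := by
    rw [norm_smul]; simp [abs_of_pos hα]; ring
  -- φ(x+αd) ≥ φ x + ηα⟨g,d⟩
  have hstep : η * α * (inner ℝ g d : ℝ) ≤ α * (inner ℝ (gradient φ x) d : ℝ)
      + L / 2 * α ^ 2 * ‖d‖ ^ 2 := by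
    rw [hsm, hns] at hd; linarith
  have hdiv : η * (inner ℝ g d : ℝ) ≤ (inner ℝ (gradient φ x) d : ℝ)
      + L / 2 * α * ‖d‖ ^ 2 := by nlinarith [hα, hstep]
  have hin : (inner ℝ (gradient φ x) d : ℝ) - (inner ℝ g d : ℝ) ≤ ‖gradient φ x - g‖ * ‖d‖ := by
    have h := real_inner_le_norm (gradient φ x - g) d
    rwa [inner_sub_left] at h
  linarith
end

section
/- Let φ have L-Lipschitz gradient, f satisfy |f(x)−φ(x)| ≤ ε_f everywhere, η ∈ (0,1/2], σ_d ∈ (0,1], κ_d ≥ 1, p ≥ 0, σ ∈ (0,1), and define ᾱ_p = 2(1−η)σ_d(1−σ)^{1+p} / (2κ_d(1+σ)^{(1+p)/2} + Lκ_d²(1+σ)^{1+p}). Suppose the direction d satisfies gᵀd ≤ −σ_d‖g‖^{1+p} and ‖d‖ ≤ κ_d‖g‖^{(1+p)/2}, the gradient estimate g satisfies ‖g − ∇φ(x)‖ ≤ max{ε₁, σ·ᾱ_p·min(‖∇φ(x)‖, ‖∇φ(x)‖^{(1+p)/2})}, and min(‖∇φ(x)‖, ‖∇φ(x)‖^{(1+p)/2})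 ≥ ε₁/(σ·ᾱ_p) > 0. Then for any step size α with 0 < α < ᾱ_p, the Armijo-type condition f(x + α d) < f(x) + η α gᵀd + 2ε_f holds. -/
open Real InnerProductSpace
set_option maxHeartbeats 2000000

lemma descent_lemma {n : ℕ} (φ : EuclideanSpace ℝ (Fin n) → ℝ) (L : ℝ) (hL : 0 ≤ L)
    (hφ : Differentiable ℝ φ)
    (hLip : LipschitzWith (Real.toNNReal L) (fun y => gradient φ y))
    (x v : EuclideanSpace ℝ (Fin n)) :
    φ (x + v) ≤ φ x + (inner ℝ (gradient φ x) v : ℝ) + L / 2 * ‖v‖ ^ 2 := by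
  set a : ℝ := (inner ℝ (gradient φ x) v : ℝ) with ha
  set b : ℝ := ‖v‖ ^ 2 with hb
  have hder : ∀ t : ℝ, HasDerivAt (fun t : ℝ => φ (x + t • v))
      ((inner ℝ (gradient φ (x + t • v)) v : ℝ)) t := by
    intro t
    have hc : HasDerivAt (fun t : ℝ => x + t • v) v t := by
      simpa using ((hasDerivAt_id t).smul_const v).const_add x
    have hg : HasFDerivAt φ (toDual ℝ _ (gradient φ (x + t • v))) (x + t • v) :=
      (hφ (x + t • v)).hasGradientAt
    have h := hg.comp_hasDerivAt t hc
    rw [toDual_apply_apply] at h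
    exact h
  set G : ℝ → ℝ := fun t => φ (x + t • v) - (a * t + L * b / 2 * t ^ 2) with hG
  have hGder : ∀ t : ℝ, HasDerivAt G
      ((inner ℝ (gradient φ (x + t • v)) v : ℝ) - (a + L * b / 2 * (2 * t))) t := by
    intro t
    refine (hder t).sub ?_
    have h1 : HasDerivAt (fun t : ℝ => a * t) a t := by
      simpa using (hasDerivAt_id t).const_mul a
    have h2 : HasDerivAt (fun t : ℝ => L * b / 2 * t ^ 2) (L * b / 2 * (2 * t)) t := by
      simpa using (hasDerivAt_pow 2 t).const_mul (L * b / 2)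
    exact h1.add h2
  have hanti : AntitoneOn G (Set.Icc (0:ℝ) 1) := by
    apply antitoneOn_of_deriv_nonpos (convex_Icc 0 1)
    · exact (Continuous.continuousOn (by
        have : Continuous (fun t : ℝ => x + t • v) := by continuity
        exact ((hφ.continuous.comp this).sub (by continuity))))
    · intro t ht
      exact ((hGder t).differentiableAt).differentiableWithinAt
    · intro t ht
      rw [interior_Icc] at ht
      rw [(hGder t).deriv]
      have hineq : (inner ℝ (gradient φ (x + t • v)) v : ℝ) - a ≤ L * t * b := by
        have h1 : (inner ℝ (gradient φ (x + t • v)) v : ℝ) - a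
            = (inner ℝ (gradient φ (x + t • v) - gradient φ x) v : ℝ) := by
          rw [ha, inner_sub_left]
        have h2 := real_inner_le_norm (gradient φ (x + t • v) - gradient φ x) v
        have h3 : ‖gradient φ (x + t • v) - gradient φ x‖ ≤ L * (t * ‖v‖) := by
          have := hLip.dist_le_mul (x + t • v) x
          rw [Real.coe_toNNReal L hL] at this
          simp only [dist_eq_norm] at this
          calc ‖gradient φ (x + t • v) - gradient φ x‖ ≤ L * ‖x + t • v - x‖ := this
            _ = L * (t * ‖v‖) := by
                rw [add_sub_cancel_left, norm_smul, Real.norm_eq_abs,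
                  abs_of_pos ht.1]
        calc (inner ℝ (gradient φ (x + t • v)) v : ℝ) - a
            = (inner ℝ (gradient φ (x + t • v) - gradient φ x) v : ℝ) := h1
          _ ≤ ‖gradient φ (x + t • v) - gradient φ x‖ * ‖v‖ := h2
          _ ≤ L * (t * ‖v‖) * ‖v‖ := by
              apply mul_le_mul_of_nonneg_right h3 (norm_nonneg _)
          _ = L * t * b := by rw [hb]; ring
      nlinarith [hineq]
  have h01 := hanti (Set.mem_Icc.mpr ⟨le_refl 0, zero_le_one⟩)
    (Set.mem_Icc.mpr ⟨zero_le_one, le_refl 1⟩) zero_le_one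
  have hG0 : G 0 = φ x := by simp [hG]
  have hG1 : G 1 = φ (x + v) - (a + L * b / 2) := by simp [hG]
  rw [hG0, hG1] at h01
  have : φ (x + v) ≤ φ x + a + L * b / 2 := by linarith
  calc φ (x + v) ≤ φ x + a + L * b / 2 := this
    _ = φ x + a + L / 2 * b := by ring

theorem stmt_3 (n : ℕ) (φ f : EuclideanSpace ℝ (Fin n) → ℝ)
    (x g d : EuclideanSpace ℝ (Fin n)) (L ε_f ε₁ η σ_d κ_d p σ ᾱ_p α : ℝ)
    (hL : 0 < L) (hφ : Differentiable ℝ φ)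
    (hLip : LipschitzWith (Real.toNNReal L) (fun y => gradient φ y))
    (hεf : 0 ≤ ε_f) (hf : ∀ y, |f y - φ y| ≤ ε_f)
    (hη0 : 0 < η) (hη1 : η ≤ 1 / 2)
    (hσd0 : 0 < σ_d) (hσd1 : σ_d ≤ 1) (hκd : 1 ≤ κ_d) (hp : 0 ≤ p)
    (hσ0 : 0 < σ) (hσ1 : σ < 1) (hε₁ : 0 ≤ ε₁)
    (hᾱp : ᾱ_p = 2 * (1 - η) * σ_d * (1 - σ) ^ (1 + p) /
      (2 * κ_d * (1 + σ) ^ ((1 + p) / 2) + L * κ_d ^ 2 * (1 + σ) ^ (1 + p)))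
    (hd1 : (inner ℝ g d : ℝ) ≤ -σ_d * ‖g‖ ^ (1 + p))
    (hd2 : ‖d‖ ≤ κ_d * ‖g‖ ^ ((1 + p) / 2))
    (hacc : ‖g - gradient φ x‖ ≤
      max ε₁ (σ * ᾱ_p * min ‖gradient φ x‖ (‖gradient φ x‖ ^ ((1 + p) / 2))))
    (hbig : min ‖gradient φ x‖ (‖gradient φ x‖ ^ ((1 + p) / 2)) ≥ ε₁ / (σ * ᾱ_p))
    (hbig' : 0 < ε₁ / (σ * ᾱ_p))
    (hα0 : 0 < α) (hα1 : α < ᾱ_p) :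
    f (x + α • d) < f x + η * α * (inner ℝ g d : ℝ) + 2 * ε_f := by
  -- abbreviations
  set G0 : ℝ := ‖gradient φ x‖ with hG0def
  set q : ℝ := (1 + p) / 2 with hqdef
  set gn : ℝ := ‖g‖ with hgndef
  set e : ℝ := ‖g - gradient φ x‖ with hedef
  set m : ℝ := min G0 (G0 ^ q) with hmdef
  set A : ℝ := κ_d * (1 + σ) ^ q with hA
  set B : ℝ := L / 2 * κ_d ^ 2 * (1 + σ) ^ (1 + p) with hB
  set N : ℝ := (1 - η) * σ_d * (1 - σ) ^ (1 + p) with hN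
  have hq0 : 0 ≤ q := by rw [hqdef]; positivity
  have h1p0 : (0:ℝ) < 1 + p := by linarith
  have h1σ : (0:ℝ) < 1 - σ := by linarith
  have h1σ' : (0:ℝ) < 1 + σ := by linarith
  -- positivity of pieces
  have hApos : 0 < A := by
    rw [hA]; positivity
  have hBpos : 0 < B := by rw [hB]; positivity
  have hNpos : 0 < N := by
    have h1 : (0:ℝ) < (1 - σ) ^ (1 + p) := Real.rpow_pos_of_pos h1σ _
    have h2 : (0:ℝ) < 1 - η := by linarith
    rw [hN]; positivity
  have hAB : A + B > 0 := by linarith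
  have hαN : ᾱ_p * (A + B) = N := by
    rw [hᾱp, hA, hB, hN]
    have hden : 2 * κ_d * (1 + σ) ^ ((1 + p) / 2) + L * κ_d ^ 2 * (1 + σ) ^ (1 + p) ≠ 0 := by
      have : 0 < 2 * κ_d * (1 + σ) ^ ((1 + p) / 2) + L * κ_d ^ 2 * (1 + σ) ^ (1 + p) := by
        have h1 : (0:ℝ) < (1 + σ) ^ ((1 + p) / 2) := Real.rpow_pos_of_pos h1σ' _
        have h2 : (0:ℝ) < (1 + σ) ^ (1 + p) := Real.rpow_pos_of_pos h1σ' _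
        have hk : (0:ℝ) < κ_d := by linarith
        positivity
      linarith [this]
    rw [hqdef]
    field_simp
  have hᾱpos : 0 < ᾱ_p := by
    have h : ᾱ_p = N / (A + B) := by
      field_simp at hαN ⊢
      linarith [hαN]
    rw [h]; exact div_pos hNpos hAB
  -- ᾱ ≤ 1
  have hA1 : 1 ≤ A := by
    rw [hA]
    have : (1:ℝ) ≤ (1 + σ) ^ q := Real.one_le_rpow (by linarith) hq0
    calc (1:ℝ) = 1 * 1 := by norm_num
      _ ≤ κ_d * (1 + σ) ^ q := mul_le_mul hκd this (by norm_num) (by linarith)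
  have hN1 : N ≤ 1 := by
    rw [hN]
    have h1 : (1 - σ) ^ (1 + p) ≤ 1 :=
      Real.rpow_le_one (le_of_lt h1σ) (by linarith) (le_of_lt h1p0)
    have h2 : (0:ℝ) < (1 - σ) ^ (1 + p) := Real.rpow_pos_of_pos h1σ _
    have hη2 : (0:ℝ) ≤ 1 - η := by linarith
    have ha : (1 - η) * σ_d ≤ 1 := by
      calc (1 - η) * σ_d ≤ 1 * 1 := mul_le_mul (by linarith) hσd1 hσd0.le (by norm_num)
        _ = 1 := by norm_num
    calc (1 - η) * σ_d * (1 - σ) ^ (1 + p) ≤ 1 * 1 :=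
        mul_le_mul ha h1 h2.le (by norm_num)
      _ = 1 := by norm_num
  have hᾱ1 : ᾱ_p ≤ 1 := by
    by_contra hcon
    push_neg at hcon
    have h1 : 1 * (A + B) < ᾱ_p * (A + B) := mul_lt_mul_of_pos_right hcon hAB
    have h2 : 1 * (A + B) = A + B := one_mul _
    linarith [hαN, hN1, hA1, hBpos]
  -- error bound
  have hσᾱ : 0 < σ * ᾱ_p := by positivity
  have hε₁m : ε₁ ≤ σ * ᾱ_p * m := by
    rw [ge_iff_le, div_le_iff₀ hσᾱ] at hbig
    linarith [hbig]
  have he : e ≤ σ * ᾱ_p * m := by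
    calc e ≤ max ε₁ (σ * ᾱ_p * m) := hacc
      _ = σ * ᾱ_p * m := max_eq_right hε₁m
  have hmpos : 0 < m := lt_of_lt_of_le hbig' hbig
  have hG0pos : 0 < G0 := lt_of_lt_of_le hmpos (min_le_left _ _)
  have hmG0 : m ≤ G0 := min_le_left _ _
  have hmq : m ≤ G0 ^ q := min_le_right _ _
  have heσ : e ≤ σ * G0 := by
    calc e ≤ σ * ᾱ_p * m := he
      _ ≤ σ * 1 * G0 := by
          apply mul_le_mul (mul_le_mul_of_nonneg_left hᾱ1 hσ0.le) hmG0 (le_of_lt hmpos)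
            (by positivity)
      _ = σ * G0 := by ring
  -- norm comparisons
  have hgn_ub : gn ≤ (1 + σ) * G0 := by
    have : gn ≤ e + G0 := by
      rw [hgndef, hedef, hG0def]
      calc ‖g‖ = ‖(g - gradient φ x) + gradient φ x‖ := by rw [sub_add_cancel]
        _ ≤ ‖g - gradient φ x‖ + ‖gradient φ x‖ := norm_add_le _ _
    linarith
  have hgn_lb : (1 - σ) * G0 ≤ gn := by
    have : G0 ≤ gn + e := by
      rw [hgndef, hedef, hG0def]
      calc ‖gradient φ x‖ = ‖g - (g - gradient φ x)‖ := by rw [sub_sub_cancel]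
        _ ≤ ‖g‖ + ‖g - gradient φ x‖ := norm_sub_le _ _
    linarith
  have hgnpos : 0 < gn := lt_of_lt_of_le (by positivity) hgn_lb
  -- rpow comparisons
  have hq2 : q + q = 1 + p := by rw [hqdef]; ring
  have hG0qq : G0 ^ q * G0 ^ q = G0 ^ (1 + p) := by
    rw [← Real.rpow_add hG0pos, hq2]
  have hgnqq : gn ^ q * gn ^ q = gn ^ (1 + p) := by
    rw [← Real.rpow_add hgnpos, hq2]
  have hσqq : ((1 + σ):ℝ) ^ q * (1 + σ) ^ q = (1 + σ) ^ (1 + p) := by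
    rw [← Real.rpow_add h1σ', hq2]
  have hgq_ub : gn ^ q ≤ (1 + σ) ^ q * G0 ^ q := by
    calc gn ^ q ≤ ((1 + σ) * G0) ^ q :=
        Real.rpow_le_rpow (norm_nonneg _) hgn_ub hq0
      _ = (1 + σ) ^ q * G0 ^ q := Real.mul_rpow (by positivity) hG0pos.le
  have hgp_ub : gn ^ (1 + p) ≤ (1 + σ) ^ (1 + p) * G0 ^ (1 + p) := by
    calc gn ^ (1 + p) ≤ ((1 + σ) * G0) ^ (1 + p) :=
        Real.rpow_le_rpow (norm_nonneg _) hgn_ub (le_of_lt h1p0)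
      _ = (1 + σ) ^ (1 + p) * G0 ^ (1 + p) := Real.mul_rpow (by positivity) hG0pos.le
  have hgp_lb : (1 - σ) ^ (1 + p) * G0 ^ (1 + p) ≤ gn ^ (1 + p) := by
    calc (1 - σ) ^ (1 + p) * G0 ^ (1 + p) = ((1 - σ) * G0) ^ (1 + p) :=
        (Real.mul_rpow (le_of_lt h1σ) hG0pos.le).symm
      _ ≤ gn ^ (1 + p) := Real.rpow_le_rpow (by positivity) hgn_lb (le_of_lt h1p0)
  have hG0p_pos : 0 < G0 ^ (1 + p) := Real.rpow_pos_of_pos hG0pos _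
  have hG0q_pos : 0 < G0 ^ q := Real.rpow_pos_of_pos hG0pos _
  have hgnq_pos : 0 < gn ^ q := Real.rpow_pos_of_pos hgnpos _
  -- bound on ‖d‖ squared
  have hdnn : 0 ≤ ‖d‖ := norm_nonneg d
  have hd_sq : ‖d‖ ^ 2 ≤ κ_d ^ 2 * gn ^ (1 + p) := by
    have h1 : ‖d‖ ^ 2 ≤ (κ_d * gn ^ q) ^ 2 := pow_le_pow_left₀ hdnn hd2 2
    calc ‖d‖ ^ 2 ≤ (κ_d * gn ^ q) ^ 2 := h1
      _ = κ_d ^ 2 * (gn ^ q * gn ^ q) := by ring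
      _ = κ_d ^ 2 * gn ^ (1 + p) := by rw [hgnqq]
  -- step 1: inner products
  have hstep1 : (inner ℝ (gradient φ x) d : ℝ) ≤ (inner ℝ g d : ℝ) + e * ‖d‖ := by
    have h1 : (inner ℝ (gradient φ x) d : ℝ) - (inner ℝ g d : ℝ)
        = (inner ℝ (gradient φ x - g) d : ℝ) := by rw [inner_sub_left]
    have h2 := real_inner_le_norm (gradient φ x - g) d
    have h3 : ‖gradient φ x - g‖ = e := by rw [hedef, norm_sub_rev]
    rw [h3] at h2
    linarith [h1, h2]
  -- step 2: e * ‖d‖ bound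
  have hstep2 : e * ‖d‖ ≤ σ * ᾱ_p * A * G0 ^ (1 + p) := by
    have e1 : e * ‖d‖ ≤ (σ * ᾱ_p * m) * (κ_d * gn ^ q) :=
      mul_le_mul he hd2 hdnn (by positivity)
    have e2 : (σ * ᾱ_p * m) * (κ_d * gn ^ q)
        ≤ (σ * ᾱ_p * G0 ^ q) * (κ_d * ((1 + σ) ^ q * G0 ^ q)) :=
      mul_le_mul (mul_le_mul_of_nonneg_left hmq (by positivity))
        (mul_le_mul_of_nonneg_left hgq_ub (by linarith)) (by positivity) (by positivity)
    calc e * ‖d‖ ≤ (σ * ᾱ_p * G0 ^ q) * (κ_d * ((1 + σ) ^ q * G0 ^ q)) := le_trans e1 e2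
      _ = σ * ᾱ_p * (κ_d * (1 + σ) ^ q) * (G0 ^ q * G0 ^ q) := by ring
      _ = σ * ᾱ_p * A * G0 ^ (1 + p) := by rw [hG0qq, hA]
  -- step 3: curvature term
  have hstep3 : L * α / 2 * ‖d‖ ^ 2 ≤ α * B * G0 ^ (1 + p) := by
    have h1 : ‖d‖ ^ 2 ≤ κ_d ^ 2 * ((1 + σ) ^ (1 + p) * G0 ^ (1 + p)) := by
      calc ‖d‖ ^ 2 ≤ κ_d ^ 2 * gn ^ (1 + p) := hd_sq
        _ ≤ κ_d ^ 2 * ((1 + σ) ^ (1 + p) * G0 ^ (1 + p)) :=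
          mul_le_mul_of_nonneg_left hgp_ub (by positivity)
    calc L * α / 2 * ‖d‖ ^ 2 ≤ L * α / 2 * (κ_d ^ 2 * ((1 + σ) ^ (1 + p) * G0 ^ (1 + p))) :=
        mul_le_mul_of_nonneg_left h1 (by positivity)
      _ = α * (L / 2 * κ_d ^ 2 * (1 + σ) ^ (1 + p)) * G0 ^ (1 + p) := by ring
      _ = α * B * G0 ^ (1 + p) := by rw [hB]
  -- step 4: descent direction term
  have hstep4 : (1 - η) * (inner ℝ g d : ℝ) ≤ -N * G0 ^ (1 + p) := by
    have h1 : (1 - η) * (inner ℝ g d : ℝ) ≤ (1 - η) * (-σ_d * gn ^ (1 + p)) := by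
      apply mul_le_mul_of_nonneg_left hd1 (by linarith)
    have h2 : (1 - η) * (-σ_d * gn ^ (1 + p)) ≤ -N * G0 ^ (1 + p) := by
      have h3 : (1 - η) * σ_d * ((1 - σ) ^ (1 + p) * G0 ^ (1 + p))
          ≤ (1 - η) * σ_d * gn ^ (1 + p) :=
        mul_le_mul_of_nonneg_left hgp_lb (by
          have hη2 : (0:ℝ) ≤ 1 - η := by linarith
          positivity)
      rw [hN]
      have he4 : (1 - η) * (-σ_d * gn ^ (1 + p)) = -((1 - η) * σ_d * gn ^ (1 + p)) := by ring
      have he5 : -((1 - η) * σ_d * (1 - σ) ^ (1 + p)) * G0 ^ (1 + p)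
          = -((1 - η) * σ_d * ((1 - σ) ^ (1 + p) * G0 ^ (1 + p))) := by ring
      rw [he4, he5]
      exact neg_le_neg h3
    linarith
  -- combine: the key strict inequality
  have hcoef : -N + σ * ᾱ_p * A + α * B < 0 := by
    have h1 : σ * ᾱ_p * A ≤ ᾱ_p * A := by
      have h0 : 0 < ᾱ_p * (1 - σ) := mul_pos hᾱpos (by linarith)
      have hσᾱ' : σ * ᾱ_p ≤ ᾱ_p := by linarith [h0]
      have := mul_le_mul_of_nonneg_right hσᾱ' hApos.le
      linarith [this]
    have h2 : α * B < ᾱ_p * B := mul_lt_mul_of_pos_right hα1 hBpos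
    have h3 : ᾱ_p * A + ᾱ_p * B = N := by rw [← hαN]; ring
    linarith
  have hkey : (inner ℝ (gradient φ x) d : ℝ) + L * α / 2 * ‖d‖ ^ 2 < η * (inner ℝ g d : ℝ) := by
    have hsum : (1 - η) * (inner ℝ g d : ℝ) + e * ‖d‖ + L * α / 2 * ‖d‖ ^ 2
        ≤ (-N + σ * ᾱ_p * A + α * B) * G0 ^ (1 + p) := by
      have hrhs : (-N + σ * ᾱ_p * A + α * B) * G0 ^ (1 + p)
          = -N * G0 ^ (1 + p) + σ * ᾱ_p * A * G0 ^ (1 + p) + α * B * G0 ^ (1 + p) := by ring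
      rw [hrhs]
      linarith [hstep2, hstep3, hstep4]
    have hneg : (-N + σ * ᾱ_p * A + α * B) * G0 ^ (1 + p) < 0 := by
      apply mul_neg_of_neg_of_pos hcoef hG0p_pos
    linarith [hstep1, hsum, hneg]
  -- descent lemma application
  have hdesc := descent_lemma φ L (le_of_lt hL) hφ hLip x (α • d)
  have hinner_smul : (inner ℝ (gradient φ x) (α • d) : ℝ) = α * (inner ℝ (gradient φ x) d : ℝ) :=
    real_inner_smul_right _ _ _
  have hnorm_smul : ‖α • d‖ ^ 2 = α ^ 2 * ‖d‖ ^ 2 := by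
    rw [norm_smul, Real.norm_eq_abs, abs_of_pos hα0, mul_pow]
  rw [hinner_smul, hnorm_smul] at hdesc
  -- function value bounds
  have hf1 : f (x + α • d) ≤ φ (x + α • d) + ε_f := by
    have := abs_le.mp (hf (x + α • d)); linarith [this.2]
  have hf2 : φ x ≤ f x + ε_f := by
    have := abs_le.mp (hf x); linarith [this.1]
  -- multiply key by α
  have hkeyα : α * (inner ℝ (gradient φ x) d : ℝ) + L / 2 * (α ^ 2 * ‖d‖ ^ 2)
      < η * α * (inner ℝ g d : ℝ) := by
    have h := mul_lt_mul_of_pos_left hkey hα0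
    have he1 : α * ((inner ℝ (gradient φ x) d : ℝ) + L * α / 2 * ‖d‖ ^ 2)
        = α * (inner ℝ (gradient φ x) d : ℝ) + L / 2 * (α ^ 2 * ‖d‖ ^ 2) := by ring
    have he2 : α * (η * (inner ℝ g d : ℝ)) = η * α * (inner ℝ g d : ℝ) := by ring
    rw [he1, he2] at h
    exact h
  linarith [hdesc, hf1, hf2, hkeyα]
end

section
/- Let φ have L-Lipschitz gradient and f satisfy |f(x)−φ(x)| ≤ ε_f for all x. If the Armijo-type condition f(x + α d) < f(x) + η α gᵀd + 2ε_f holds with gᵀd ≤ −σ_d‖g‖^{1+p}, ‖g‖ ≥ (1−σ)‖∇φ(x)‖, ‖∇φ(x)‖ ≥ ε₁/(σ·ᾱ_p) with σ ᾱ_p ≤ 1, ε₁ ≥ 0, σ > 0, ᾱ_p > 0, α ≥ θᾱ_p, η > 0, σ_d > 0, σ ∈ (0,1), θ ∈ (0,1], then φ(x) − φ(x + αd) > η θ ᾱ_p σ_d (1−σ)^{1+p} (ε₁/(σᾱ_p))^{1+p} − 4ε_f. -/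
open Real

theorem stmt_6 (n : ℕ) (φ f : EuclideanSpace ℝ (Fin n) → ℝ)
    (x g d : EuclideanSpace ℝ (Fin n)) (L ε_f ε₁ η σ_d p σ ᾱ_p θ α : ℝ)
    (hL : 0 < L) (hφ : Differentiable ℝ φ)
    (hLip : LipschitzWith (Real.toNNReal L) (fun y => gradient φ y))
    (hεf : 0 ≤ ε_f) (hf : ∀ y, |f y - φ y| ≤ ε_f)
    (harmijo : f (x + α • d) < f x + η * α * (inner ℝ g d : ℝ) + 2 * ε_f)
    (hd1 : (inner ℝ g d : ℝ) ≤ -σ_d * ‖g‖ ^ (1 + p))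
    (hlo : ‖g‖ ≥ (1 - σ) * ‖gradient φ x‖)
    (hgrad : ‖gradient φ x‖ ≥ ε₁ / (σ * ᾱ_p)) (hσᾱ : σ * ᾱ_p ≤ 1)
    (hε₁ : 0 ≤ ε₁) (hσ0 : 0 < σ) (hσ1 : σ < 1) (hᾱp : 0 < ᾱ_p)
    (hα : α ≥ θ * ᾱ_p) (hη : 0 < η) (hσd : 0 < σ_d)
    (hθ0 : 0 < θ) (hθ1 : θ ≤ 1) (hp : 0 ≤ p) (hα0 : 0 < α) :
    φ x - φ (x + α • d) >
      η * θ * ᾱ_p * σ_d * (1 - σ) ^ (1 + p) * (ε₁ / (σ * ᾱ_p)) ^ (1 + p) - 4 * ε_f := by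
  have h1σ : (0:ℝ) < 1 - σ := by linarith
  have hq0 : 0 ≤ ε₁ / (σ * ᾱ_p) := div_nonneg hε₁ (by positivity)
  have hfx := abs_le.mp (hf x)
  have hfy := abs_le.mp (hf (x + α • d))
  have h1 : φ x - φ (x + α • d) ≥ f x - f (x + α • d) - 2 * ε_f := by linarith
  -- ‖g‖ ≥ (1-σ) * (ε₁/(σ ᾱ_p)) ≥ 0
  have hg1 : ‖g‖ ≥ (1 - σ) * (ε₁ / (σ * ᾱ_p)) := by
    calc ‖g‖ ≥ (1 - σ) * ‖gradient φ x‖ := hlo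
      _ ≥ (1 - σ) * (ε₁ / (σ * ᾱ_p)) := by
          exact mul_le_mul_of_nonneg_left hgrad (le_of_lt h1σ)
  have hbase0 : 0 ≤ (1 - σ) * (ε₁ / (σ * ᾱ_p)) := mul_nonneg h1σ.le hq0
  have h4 : ‖g‖ ^ (1 + p) ≥ ((1 - σ) * (ε₁ / (σ * ᾱ_p))) ^ (1 + p) :=
    Real.rpow_le_rpow hbase0 hg1 (by linarith)
  have hsplit : ((1 - σ) * (ε₁ / (σ * ᾱ_p))) ^ (1 + p)
      = (1 - σ) ^ (1 + p) * (ε₁ / (σ * ᾱ_p)) ^ (1 + p) :=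
    Real.mul_rpow h1σ.le hq0
  -- -⟨g,d⟩ ≥ σ_d ‖g‖^(1+p)
  have h5 : η * α * (inner ℝ g d : ℝ) ≤ -(η * α * (σ_d * ‖g‖ ^ (1 + p))) := by
    have := mul_le_mul_of_nonneg_left hd1 (by positivity : (0:ℝ) ≤ η * α)
    linarith
  have hmono : η * α * (σ_d * ‖g‖ ^ (1 + p))
      ≥ η * (θ * ᾱ_p) * (σ_d * ((1 - σ) * (ε₁ / (σ * ᾱ_p))) ^ (1 + p)) := by
    have hp1 : 0 ≤ ((1 - σ) * (ε₁ / (σ * ᾱ_p))) ^ (1 + p) := Real.rpow_nonneg hbase0 _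
    have h6 : σ_d * ((1 - σ) * (ε₁ / (σ * ᾱ_p))) ^ (1 + p) ≤ σ_d * ‖g‖ ^ (1 + p) :=
      mul_le_mul_of_nonneg_left h4 hσd.le
    have h7 : η * (θ * ᾱ_p) ≤ η * α :=
      mul_le_mul_of_nonneg_left hα hη.le
    exact mul_le_mul h7 h6 (by positivity) (by positivity)
  have harm2 : f x - f (x + α • d) > -(η * α * (inner ℝ g d : ℝ)) - 2 * ε_f := by linarith
  have key : φ x - φ (x + α • d) >
      η * (θ * ᾱ_p) * (σ_d * ((1 - σ) * (ε₁ / (σ * ᾱ_p))) ^ (1 + p)) - 4 * ε_f := by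
    linarith
  calc φ x - φ (x + α • d)
      > η * (θ * ᾱ_p) * (σ_d * ((1 - σ) * (ε₁ / (σ * ᾱ_p))) ^ (1 + p)) - 4 * ε_f := key
    _ = η * θ * ᾱ_p * σ_d * (1 - σ) ^ (1 + p) * (ε₁ / (σ * ᾱ_p)) ^ (1 + p) - 4 * ε_f := by
        rw [hsplit]; ring
end

section
/- In a backtracking Armijo line search accepting α = 1 immediately: if f(x+d) < f(x) + η gᵀd + 2ε_f, |f − φ| ≤ ε_f pointwise, gᵀd ≤ −σ_d‖g‖^{1+p}, and ‖g‖ ≥ (1−σ)‖∇φ(x)‖ with ‖∇φ(x)‖^{1+p} ≥ (ε₁/(σᾱ_p))^{1+p} and σᾱ_p ≤ 1, where η, σ_d > 0, σ ∈ (0,1), ᾱ_p ∈ (0,1], ε₁ ≥ 0, then φ(x) − φ(x+d) > η σ_d (1−σ)^{1+p} (ε₁/(σᾱ_p))^{1+p} − 4ε_f ≥ η σ_d ((1−σ)^{1+p}/σᵖ)·ε₁^{1+p} − 4ε_f. -/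
open Real

theorem stmt_13 (n : ℕ) (φ f : EuclideanSpace ℝ (Fin n) → ℝ)
    (x g d : EuclideanSpace ℝ (Fin n)) (ε_f ε₁ η σ_d p σ ᾱ_p : ℝ)
    (hεf : 0 ≤ ε_f) (hf : ∀ y, |f y - φ y| ≤ ε_f)
    (harmijo : f (x + d) < f x + η * (inner ℝ g d : ℝ) + 2 * ε_f)
    (hd1 : (inner ℝ g d : ℝ) ≤ -σ_d * ‖g‖ ^ (1 + p))
    (hlo : ‖g‖ ≥ (1 - σ) * ‖gradient φ x‖)
    (hgrad : ‖gradient φ x‖ ^ (1 + p) ≥ (ε₁ / (σ * ᾱ_p)) ^ (1 + p))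
    (hσᾱ : σ * ᾱ_p ≤ 1) (hη : 0 < η) (hσd : 0 < σ_d)
    (hσ0 : 0 < σ) (hσ1 : σ < 1) (hᾱp0 : 0 < ᾱ_p) (hᾱp1 : ᾱ_p ≤ 1)
    (hε₁ : 0 ≤ ε₁) (hp : 0 ≤ p) :
    φ x - φ (x + d) > η * σ_d * (1 - σ) ^ (1 + p) * (ε₁ / (σ * ᾱ_p)) ^ (1 + p) - 4 * ε_f ∧
      η * σ_d * (1 - σ) ^ (1 + p) * (ε₁ / (σ * ᾱ_p)) ^ (1 + p) - 4 * ε_f ≥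
        η * σ_d * ((1 - σ) ^ (1 + p) / σ ^ p) * ε₁ ^ (1 + p) - 4 * ε_f := by
  have h1p : (0:ℝ) ≤ 1 + p := by linarith
  have hσ' : (0:ℝ) ≤ 1 - σ := by linarith
  have hσᾱ0 : 0 < σ * ᾱ_p := mul_pos hσ0 hᾱp0
  have hgnn : (0:ℝ) ≤ ‖gradient φ x‖ := norm_nonneg _
  have hkey : (1 - σ) ^ (1 + p) * (ε₁ / (σ * ᾱ_p)) ^ (1 + p) ≤ ‖g‖ ^ (1 + p) := by
    calc (1 - σ) ^ (1 + p) * (ε₁ / (σ * ᾱ_p)) ^ (1 + p)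
        ≤ (1 - σ) ^ (1 + p) * ‖gradient φ x‖ ^ (1 + p) :=
          mul_le_mul_of_nonneg_left hgrad (Real.rpow_nonneg hσ' _)
      _ = ((1 - σ) * ‖gradient φ x‖) ^ (1 + p) := (Real.mul_rpow hσ' hgnn).symm
      _ ≤ ‖g‖ ^ (1 + p) := Real.rpow_le_rpow (mul_nonneg hσ' hgnn) hlo h1p
  have ha := abs_le.mp (hf x)
  have hb := abs_le.mp (hf (x + d))
  have hinner : η * (inner ℝ g d : ℝ) ≤ -(η * σ_d * ‖g‖ ^ (1 + p)) := by nlinarith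
  have hmul : η * σ_d * ((1 - σ) ^ (1 + p) * (ε₁ / (σ * ᾱ_p)) ^ (1 + p)) ≤ η * σ_d * ‖g‖ ^ (1 + p) :=
    mul_le_mul_of_nonneg_left hkey (by positivity)
  constructor
  · nlinarith [ha.1, ha.2, hb.1, hb.2]
  · have hle : (σ * ᾱ_p) ^ (1 + p) ≤ σ ^ p := by
      calc (σ * ᾱ_p) ^ (1 + p) ≤ σ ^ (1 + p) :=
            Real.rpow_le_rpow (le_of_lt hσᾱ0) (by nlinarith) h1p
        _ = σ * σ ^ p := by rw [Real.rpow_add hσ0, Real.rpow_one]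
        _ ≤ 1 * σ ^ p :=
            mul_le_mul_of_nonneg_right (le_of_lt hσ1) (Real.rpow_nonneg (le_of_lt hσ0) _)
        _ = σ ^ p := one_mul _
    have hdiv : ε₁ ^ (1 + p) / σ ^ p ≤ (ε₁ / (σ * ᾱ_p)) ^ (1 + p) := by
      rw [Real.div_rpow hε₁ (le_of_lt hσᾱ0)]
      exact div_le_div_of_nonneg_left (Real.rpow_nonneg hε₁ _) (Real.rpow_pos_of_pos hσᾱ0 _) hle
    have := mul_le_mul_of_nonneg_left hdiv
      (show (0:ℝ) ≤ η * σ_d * (1 - σ) ^ (1 + p) by positivity)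
    have hrw : η * σ_d * ((1 - σ) ^ (1 + p) / σ ^ p) * ε₁ ^ (1 + p)
        = η * σ_d * (1 - σ) ^ (1 + p) * (ε₁ ^ (1 + p) / σ ^ p) := by ring
    linarith [this]
end
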